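/- Let 𝓛_m = Π_m 𝓛 Π_m where Π_m is the interpolation projection and 𝓛 satisfies Lip(𝓛 f) ≤ α Lip(f) + B₁|f|_∞ with α ∈ (0,1), and |𝓛ⁿ f|_∞ ≤ Mⁿ|f|_∞. Then Lip(𝓛_m f) ≤ α Lip(f) + B₁|f|_∞, and for all n ≥ 1, ‖𝓛_mⁿ f‖ ≤ αⁿ ‖f‖ + C₃ Mⁿ |f|_∞, where C₃ = B₁/(M(1−α)) + 1 and ‖f‖ = Lip(f) + |f|_∞ (assuming M ≥ 1). -/

import Mathlib

/-- The Lipschitz constant of `f` on `[0,1]`. -/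
noncomputable def lipC (f : ℝ → ℝ) : ℝ :=
  sInf {K : ℝ | 0 ≤ K ∧ ∀ x ∈ Set.Icc (0:ℝ) 1, ∀ y ∈ Set.Icc (0:ℝ) 1,
    |f x - f y| ≤ K * |x - y|}

/-- The sup norm of `f` on `[0,1]`. -/
noncomputable def supN (f : ℝ → ℝ) : ℝ :=
  sSup {C : ℝ | ∃ x ∈ Set.Icc (0:ℝ) 1, C = |f x|}

/-- `f` is Lipschitz on `[0,1]`. -/
def IsLip (f : ℝ → ℝ) : Prop :=
  ∃ K : NNReal, LipschitzOnWith K f (Set.Icc (0:ℝ) 1)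

/-- with `𝓛_m = Π_m 𝓛 Π_m`, where `Π_m` is the interpolation
projection (`Π² = Π`, `Lip(Π g) ≤ Lip g`, `|Π g|_∞ ≤ |g|_∞`) and `𝓛` satisfies
`Lip(𝓛 f) ≤ α Lip f + B₁ |f|_∞` (`0 < α < 1`) and `|𝓛ⁿ f|_∞ ≤ Mⁿ |f|_∞`
(`M ≥ 1`), one has `Lip(𝓛_m f) ≤ α Lip f + B₁ |f|_∞` and, for all `n ≥ 1`,
`‖𝓛_mⁿ f‖ ≤ αⁿ ‖f‖ + C₃ Mⁿ |f|_∞` with `C₃ = B₁/(M(1−α)) + 1`. -/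
theorem stmt_14 (𝓛 Pr : Module.End ℝ (ℝ → ℝ)) (α B₁ M : ℝ)
    (hα : 0 < α) (hα1 : α < 1) (hB₁ : 0 ≤ B₁) (hM : 1 ≤ M)
    (hPrproj : Pr ∘ₗ Pr = Pr)
    (hPrlipkeep : ∀ g, IsLip g → IsLip (Pr g))
    (hPrlip : ∀ g, IsLip g → lipC (Pr g) ≤ lipC g)
    (hPrsup : ∀ g, supN (Pr g) ≤ supN g)
    (hLlip : ∀ f, IsLip f → IsLip (𝓛 f))
    (hLY : ∀ f, IsLip f → lipC (𝓛 f) ≤ α * lipC f + B₁ * supN f)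
    (hbdd : ∀ n : ℕ, ∀ f, supN ((𝓛 ^ n) f) ≤ M ^ n * supN f) :
    (∀ f, IsLip f → lipC ((Pr ∘ₗ 𝓛 ∘ₗ Pr) f) ≤ α * lipC f + B₁ * supN f) ∧
    (∀ n : ℕ, 1 ≤ n → ∀ f, IsLip f →
      lipC (((Pr ∘ₗ 𝓛 ∘ₗ Pr) ^ n) f) + supN (((Pr ∘ₗ 𝓛 ∘ₗ Pr) ^ n) f) ≤
        α ^ n * (lipC f + supN f) + (B₁ / (M * (1 - α)) + 1) * M ^ n * supN f) := by
  have supN_nn : ∀ g : ℝ → ℝ, 0 ≤ supN g := by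
    intro g
    apply Real.sSup_nonneg
    rintro x ⟨y, -, rfl⟩
    exact abs_nonneg _
  have lipC_nn : ∀ g : ℝ → ℝ, 0 ≤ lipC g := by
    intro g
    apply Real.sInf_nonneg
    rintro x ⟨hx, -⟩
    exact hx
  have hMpos : (0:ℝ) < M := lt_of_lt_of_le one_pos hM
  have h1α : (0:ℝ) < 1 - α := by linarith
  set L : Module.End ℝ (ℝ → ℝ) := Pr ∘ₗ 𝓛 ∘ₗ Pr with hLdef
  have happly : ∀ g, L g = Pr (𝓛 (Pr g)) := fun g => rfl
  have hlipkeep : ∀ g, IsLip g → IsLip (L g) := by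
    intro g hg
    rw [happly]
    exact hPrlipkeep _ (hLlip _ (hPrlipkeep g hg))
  have hstep_lip : ∀ g, IsLip g → lipC (L g) ≤ α * lipC g + B₁ * supN g := by
    intro g hg
    have h1 : IsLip (Pr g) := hPrlipkeep g hg
    have h2 : IsLip (𝓛 (Pr g)) := hLlip _ h1
    calc lipC (L g) ≤ lipC (𝓛 (Pr g)) := by rw [happly]; exact hPrlip _ h2
      _ ≤ α * lipC (Pr g) + B₁ * supN (Pr g) := hLY _ h1
      _ ≤ α * lipC g + B₁ * supN g :=
        add_le_add (mul_le_mul_of_nonneg_left (hPrlip g hg) hα.le)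
          (mul_le_mul_of_nonneg_left (hPrsup g) hB₁)
  have hstep_sup : ∀ g, supN (L g) ≤ M * supN g := by
    intro g
    have h2 := hbdd 1 (Pr g)
    rw [pow_one, pow_one] at h2
    calc supN (L g) ≤ supN (𝓛 (Pr g)) := by rw [happly]; exact hPrsup _
      _ ≤ M * supN (Pr g) := h2
      _ ≤ M * supN g := mul_le_mul_of_nonneg_left (hPrsup g) hMpos.le
  have hislip_n : ∀ f, IsLip f → ∀ n : ℕ, IsLip ((L ^ n) f) := by
    intro f hf n
    induction n with
    | zero => simpa using hf
    | succ n ih =>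
      rw [pow_succ', Module.End.mul_apply]
      exact hlipkeep _ ih
  have hsup_n : ∀ f, ∀ n : ℕ, supN ((L ^ n) f) ≤ M ^ n * supN f := by
    intro f n
    induction n with
    | zero => simp
    | succ n ih =>
      rw [pow_succ', Module.End.mul_apply]
      calc supN (L ((L ^ n) f)) ≤ M * supN ((L ^ n) f) := hstep_sup _
        _ ≤ M * (M ^ n * supN f) := mul_le_mul_of_nonneg_left ih hMpos.le
        _ = M ^ (n + 1) * supN f := by ring
  have hlip_n : ∀ f, IsLip f → ∀ n : ℕ,
      lipC ((L ^ (n + 1)) f) ≤ α ^ (n + 1) * lipC f + B₁ / (1 - α) * M ^ n * supN f := by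
    intro f hf n
    induction n with
    | zero =>
      have h := hstep_lip f hf
      rw [pow_one] at *
      have hb : B₁ * supN f ≤ B₁ / (1 - α) * M ^ 0 * supN f := by
        rw [pow_zero, mul_one]
        have : B₁ ≤ B₁ / (1 - α) := by
          rw [le_div_iff₀ h1α]; nlinarith
        exact mul_le_mul_of_nonneg_right this (supN_nn f)
      calc lipC (L f) ≤ α * lipC f + B₁ * supN f := h
        _ ≤ α ^ 1 * lipC f + B₁ / (1 - α) * M ^ 0 * supN f := by
          rw [pow_one]; exact add_le_add_right hb _
    | succ n ih =>
      have hLn : IsLip ((L ^ (n + 1)) f) := hislip_n f hf (n + 1)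
      have hMn : M ^ n ≤ M ^ (n + 1) := pow_le_pow_right₀ hM (Nat.le_succ n)
      have hCnn : 0 ≤ B₁ / (1 - α) := div_nonneg hB₁ h1α.le
      have hsf : 0 ≤ supN f := supN_nn f
      calc lipC ((L ^ (n + 2)) f) = lipC (L ((L ^ (n + 1)) f)) := by
            rw [pow_succ', Module.End.mul_apply]
        _ ≤ α * lipC ((L ^ (n + 1)) f) + B₁ * supN ((L ^ (n + 1)) f) := hstep_lip _ hLn
        _ ≤ α * (α ^ (n + 1) * lipC f + B₁ / (1 - α) * M ^ n * supN f)
              + B₁ * (M ^ (n + 1) * supN f) :=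
            add_le_add (mul_le_mul_of_nonneg_left ih hα.le)
              (mul_le_mul_of_nonneg_left (hsup_n f (n + 1)) hB₁)
        _ ≤ α ^ (n + 2) * lipC f + B₁ / (1 - α) * M ^ (n + 1) * supN f := by
            have hkey : α * (B₁ / (1 - α)) + B₁ = B₁ / (1 - α) := by
              field_simp; ring
            have h1 : α * (B₁ / (1 - α) * M ^ n * supN f)
                ≤ α * (B₁ / (1 - α)) * M ^ (n + 1) * supN f := by
              have h0 := mul_le_mul_of_nonneg_left hMn (mul_nonneg hα.le hCnn)
              nlinarith
            have h2 : α * (α ^ (n + 1) * lipC f) = α ^ (n + 2) * lipC f := by ring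
            have h3 : (α * (B₁ / (1 - α)) + B₁) * (M ^ (n + 1) * supN f)
                = B₁ / (1 - α) * (M ^ (n + 1) * supN f) := by rw [hkey]
            nlinarith [h1, h2, h3]
  refine ⟨fun f hf => hstep_lip f hf, ?_⟩
  intro n hn f hf
  obtain ⟨m, rfl⟩ := Nat.exists_eq_add_of_le hn
  have hlip := hlip_n f hf m
  have hsup := hsup_n f (m + 1)
  have hsf : 0 ≤ supN f := supN_nn f
  have hkey : B₁ / (M * (1 - α)) * M = B₁ / (1 - α) := by
    field_simp
  have hpow : (0:ℝ) ≤ M ^ m := pow_nonneg hMpos.le m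
  have hαpow : (0:ℝ) ≤ α ^ (m + 1) := pow_nonneg hα.le _
  have h1m : (1 : ℕ) + m = m + 1 := by omega
  rw [h1m]
  have hMs : M ^ (m + 1) = M * M ^ m := by ring
  have hkey2 : B₁ / (1 - α) * M ^ m * supN f
      = B₁ / (M * (1 - α)) * M ^ (m + 1) * supN f := by
    rw [hMs, ← hkey]; ring
  linarith [hlip, hsup, mul_nonneg hαpow hsf, hkey2]
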